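/- Let Θ : (0,1) × [0,1] → [0,1] be a function such that: (a) for every p ∈ (0,1) the map x ↦ Θ(p,x) is continuous and strictly increasing on [0,1] and satisfies the de Rham system for p, i.e. Θ(p,x/2) = p·Θ(p,x) and Θ(p,(x+1)/2) = (1−p)·Θ(p,x) + p for all x ∈ [0,1]; (b) for every x ∈ [0,1] the map p ↦ Θ(p,x) is Borel measurable. Let μ be a Borel probability measure on (0,1). Then the function φ_μ : [0,1] → [0,1] defined by φ_μ(x) = ∫_{(0,1)} Θ(p,x) dμ(p) is continuous, strictly increasing, satisfies φ_μ(0) = 0 and φ_μ(1) = 1, and satisfies φ_μ(x) = φ_μ(x/2) + φ_μ((x+1)/2) − φ_μ(1/2) for every x ∈ [0,1] (i.e. φ_μ is a strictly increasing solution of the MW-problem). -/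

import Mathlib

open MeasureTheory

/-- If `Θ (p, ·)` is, for each `p ∈ (0,1)`, a continuous strictly increasing
self-map of `[0,1]` satisfying the de Rham system for `p`, `Θ (·, x)` is Borel measurable,
and `μ` is a Borel probability measure concentrated on `(0,1)`, then
`φ_μ (x) = ∫_{(0,1)} Θ(p,x) dμ(p)` is a strictly increasing solution of the MW-problem. -/
theorem stmt_2 (Θ : ℝ → ℝ → ℝ)
    (hmaps : ∀ p ∈ Set.Ioo (0:ℝ) 1, ∀ x ∈ Set.Icc (0:ℝ) 1, Θ p x ∈ Set.Icc (0:ℝ) 1)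
    (hcont : ∀ p ∈ Set.Ioo (0:ℝ) 1, ContinuousOn (Θ p) (Set.Icc (0:ℝ) 1))
    (hsm : ∀ p ∈ Set.Ioo (0:ℝ) 1, StrictMonoOn (Θ p) (Set.Icc (0:ℝ) 1))
    (hdR1 : ∀ p ∈ Set.Ioo (0:ℝ) 1, ∀ x ∈ Set.Icc (0:ℝ) 1, Θ p (x / 2) = p * Θ p x)
    (hdR2 : ∀ p ∈ Set.Ioo (0:ℝ) 1, ∀ x ∈ Set.Icc (0:ℝ) 1,
      Θ p ((x + 1) / 2) = (1 - p) * Θ p x + p)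
    (hmeas : ∀ x ∈ Set.Icc (0:ℝ) 1, Measurable fun p => Θ p x)
    (μ : Measure ℝ) [IsProbabilityMeasure μ] (hμ : μ (Set.Ioo (0:ℝ) 1) = 1)
    (φμ : ℝ → ℝ) (hφμ : ∀ x, φμ x = ∫ p in Set.Ioo (0:ℝ) 1, Θ p x ∂μ) :
    Set.MapsTo φμ (Set.Icc (0:ℝ) 1) (Set.Icc (0:ℝ) 1) ∧
    ContinuousOn φμ (Set.Icc (0:ℝ) 1) ∧
    StrictMonoOn φμ (Set.Icc (0:ℝ) 1) ∧
    φμ 0 = 0 ∧ φμ 1 = 1 ∧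
    ∀ x ∈ Set.Icc (0:ℝ) 1, φμ x = φμ (x / 2) + φμ ((x + 1) / 2) - φμ (1 / 2) := by
  set s : Set ℝ := Set.Ioo (0:ℝ) 1 with hs
  have hms : MeasurableSet s := measurableSet_Ioo
  -- basic values
  have h0 : ∀ p ∈ s, Θ p 0 = 0 := by
    intro p hp
    have h := hdR1 p hp 0 (by norm_num)
    rw [show (0:ℝ)/2 = 0 by norm_num] at h
    nlinarith [hp.1, hp.2]
  have h1 : ∀ p ∈ s, Θ p 1 = 1 := by
    intro p hp
    have h := hdR2 p hp 1 (by norm_num)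
    rw [show ((1:ℝ)+1)/2 = 1 by norm_num] at h
    nlinarith [hp.1]
  have hfe : ∀ p ∈ s, ∀ x ∈ Set.Icc (0:ℝ) 1,
      Θ p x = Θ p (x/2) + Θ p ((x+1)/2) - Θ p (1/2) := by
    intro p hp x hx
    have e1 := hdR1 p hp x hx
    have e2 := hdR2 p hp x hx
    have e3 := hdR1 p hp 1 (by norm_num)
    rw [h1 p hp] at e3
    rw [e1, e2, e3]; ring
  have hhalf : ∀ x : ℝ, x ∈ Set.Icc (0:ℝ) 1 → x/2 ∈ Set.Icc (0:ℝ) 1 := by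
    intro x hx; constructor <;> [linarith [hx.1]; linarith [hx.2]]
  have hhalf' : ∀ x : ℝ, x ∈ Set.Icc (0:ℝ) 1 → (x+1)/2 ∈ Set.Icc (0:ℝ) 1 := by
    intro x hx; constructor <;> [linarith [hx.1]; linarith [hx.2]]
  -- integrability
  have hint : ∀ x ∈ Set.Icc (0:ℝ) 1, Integrable (fun p => Θ p x) (μ.restrict s) := by
    intro x hx
    refine Integrable.mono' (integrable_const 1) (hmeas x hx).aestronglyMeasurable ?_
    filter_upwards [ae_restrict_mem hms] with p hp
    have h := hmaps p hp x hx
    rw [Real.norm_eq_abs, abs_le]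
    exact ⟨by linarith [h.1], h.2⟩
  -- maps to
  have hmapsto : Set.MapsTo φμ (Set.Icc (0:ℝ) 1) (Set.Icc (0:ℝ) 1) := by
    intro x hx
    rw [hφμ x]
    constructor
    · exact setIntegral_nonneg hms fun p hp => (hmaps p hp x hx).1
    · calc ∫ p in s, Θ p x ∂μ ≤ ∫ _ in s, (1:ℝ) ∂μ :=
            setIntegral_mono_on (hint x hx) (integrable_const 1) hms
              fun p hp => (hmaps p hp x hx).2
        _ = 1 := by rw [setIntegral_const, Measure.real, hμ]; simp
  refine ⟨hmapsto, ?_, ?_, ?_, ?_, ?_⟩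
  · -- continuity
    have : ContinuousOn (fun x => ∫ p in s, Θ p x ∂μ) (Set.Icc (0:ℝ) 1) := by
      refine continuousOn_of_dominated (bound := fun _ => (1:ℝ))
        (fun x hx => (hmeas x hx).aestronglyMeasurable) ?_ (integrable_const 1) ?_
      · intro x hx
        filter_upwards [ae_restrict_mem hms] with p hp
        have h := hmaps p hp x hx
        rw [Real.norm_eq_abs, abs_le]
        exact ⟨by linarith [h.1], h.2⟩
      · filter_upwards [ae_restrict_mem hms] with p hp
        exact hcont p hp
    exact this.congr fun x _ => hφμ x
  · -- strict mono
    intro x hx y hy hxy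
    have hlt : 0 < ∫ p in s, (Θ p y - Θ p x) ∂μ := by
      rw [setIntegral_pos_iff_support_of_nonneg_ae]
      · refine lt_of_lt_of_le (by rw [hμ]; norm_num) (measure_mono ?_)
        intro p hp
        refine ⟨?_, hp⟩
        have := hsm p hp hx hy hxy
        simp only [Function.mem_support]
        intro h; linarith
      · filter_upwards [ae_restrict_mem hms] with p hp
        have := hsm p hp hx hy hxy
        simp only [Pi.zero_apply]; linarith
      · exact (hint y hy).sub (hint x hx)
    have heq : ∫ p in s, (Θ p y - Θ p x) ∂μ
        = (∫ p in s, Θ p y ∂μ) - ∫ p in s, Θ p x ∂μ :=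
      integral_sub (hint y hy) (hint x hx)
    rw [hφμ x, hφμ y]
    linarith [heq ▸ hlt]
  · -- φμ 0 = 0
    rw [hφμ 0]
    rw [setIntegral_congr_fun hms (g := fun _ => (0:ℝ)) fun p hp => h0 p hp]
    simp
  · -- φμ 1 = 1
    rw [hφμ 1]
    rw [setIntegral_congr_fun hms (g := fun _ => (1:ℝ)) fun p hp => h1 p hp]
    rw [setIntegral_const, Measure.real, hμ]; simp
  · -- functional equation
    intro x hx
    rw [hφμ x, hφμ (x/2), hφμ ((x+1)/2), hφμ (1/2)]
    rw [setIntegral_congr_fun hms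
      (g := fun p => Θ p (x/2) + Θ p ((x+1)/2) - Θ p (1/2)) fun p hp => hfe p hp x hx]
    have hA := hint _ (hhalf x hx)
    have hB := hint _ (hhalf' x hx)
    have hC := hint (1/2) (by norm_num : (1:ℝ)/2 ∈ Set.Icc (0:ℝ) 1)
    have hAB : Integrable (fun p => Θ p (x/2) + Θ p ((x+1)/2)) (μ.restrict s) := hA.add hB
    rw [integral_sub hAB hC, integral_add hA hB]
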